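/- arXiv:2604.13664 — 2 statements merged into one kernel-verified Lean document; each statement's English description precedes it below -/
import Mathlib

section
/- The set of dominators of any vertex v (other than the root) is totally ordered by the dominance relation: if d1 and d2 both dominate v, then d1 dominates d2 or d2 dominates d1. -/
/-- A directed path from `s` to `t` given as the list of visited vertices. -/
def IsPath {V : Type*} (E : V → V → Prop) (s t : V) (p : List V) : Prop :=
  p.head? = some s ∧ p.getLast? = some t ∧ p.Chain' E

/-- `t` is reachable from `s`. -/
def Reach {V : Type*} (E : V → V → Prop) (s t : V) : Prop :=
  ∃ p, IsPath E s t p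

/-- `d` dominates `v` (w.r.t. root `r`): every path from `r` to `v` contains `d`. -/
def Dom {V : Type*} (E : V → V → Prop) (r d v : V) : Prop :=
  ∀ p, IsPath E r v p → d ∈ p

/-- Split a list at the last occurrence of an element. -/
lemma split_last {V : Type*} {d : V} {p : List V} (h : d ∈ p) :
    ∃ p1 p2, p = p1 ++ d :: p2 ∧ d ∉ p2 := by
  induction p with
  | nil => simp at h
  | cons a l ih =>
    by_cases hd : d ∈ l
    · obtain ⟨p1, p2, rfl, h2⟩ := ih hd
      exact ⟨a :: p1, p2, rfl, h2⟩
    · rcases List.mem_cons.1 h with rfl | hl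
      · exact ⟨[], l, rfl, hd⟩
      · exact absurd hl hd

lemma isPath_suffix {V : Type*} {E : V → V → Prop} {s t d : V} {p1 p2 : List V}
    (h : IsPath E s t (p1 ++ d :: p2)) : IsPath E d t (d :: p2) := by
  obtain ⟨-, hlast, hchain⟩ := h
  refine ⟨rfl, ?_, hchain.suffix ⟨p1, rfl⟩⟩
  rw [List.getLast?_append] at hlast
  rcases hx : (d :: p2).getLast? with _ | x
  · simp at hx
  · rw [hx] at hlast; simpa [Option.or] using hlast

lemma isPath_concat {V : Type*} {E : V → V → Prop} {r d t : V} {q p2 : List V}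
    (hq : IsPath E r d q) (hp : IsPath E d t (d :: p2)) : IsPath E r t (q ++ p2) := by
  obtain ⟨hqh, hql, hqc⟩ := hq
  obtain ⟨-, hpl, hpc⟩ := hp
  have hqne : q ≠ [] := by rintro rfl; simp at hqh
  replace hpc := List.isChain_cons.1 hpc
  refine ⟨?_, ?_, ?_⟩
  · rwa [List.head?_append_of_ne_nil _ hqne]
  · rcases List.eq_nil_or_concat p2 with rfl | ⟨l, a, rfl⟩
    · simpa using hql.trans (by simpa using hpl)
    · rw [List.getLast?_append]
      rw [show d :: l.concat a = (d :: l) ++ [a] by simp] at hpl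
      rw [List.getLast?_append] at hpl
      simpa [Option.or] using hpl
  · refine List.IsChain.append hqc hpc.2 ?_
    intro x hx y hy
    rw [hql, Option.mem_def, Option.some.injEq] at hx
    subst hx
    exact hpc.1 y hy

lemma mem_of_getLast? {V : Type*} {d : V} {p : List V} (h : p.getLast? = some d) : d ∈ p := by
  rcases List.eq_nil_or_concat p with rfl | ⟨l, a, rfl⟩
  · simp at h
  · simp_all [List.getLast?_append]

/-- The dominators of any vertex are totally ordered by dominance. -/
theorem dominators_totally_ordered {V : Type*} (E : V → V → Prop) (r v d1 d2 : V)
    (hreach : ∀ u, Reach E r u) (hv : v ≠ r)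
    (h1 : Dom E r d1 v) (h2 : Dom E r d2 v) :
    Dom E r d1 d2 ∨ Dom E r d2 d1 := by
  by_contra hcon
  push_neg at hcon
  obtain ⟨hn1, hn2⟩ := hcon
  simp only [Dom, not_forall] at hn1 hn2
  obtain ⟨q1, hq1, hq1d⟩ := hn1  -- path r → d2 avoiding d1
  obtain ⟨q2, hq2, hq2d⟩ := hn2  -- path r → d1 avoiding d2
  obtain ⟨p, hp⟩ := hreach v
  have hd2p : d2 ∈ p := h2 p hp
  obtain ⟨pa, pb, rfl, hd2pb⟩ := split_last hd2p
  have hsuf : IsPath E d2 v (d2 :: pb) := isPath_suffix hp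
  by_cases hd1 : d1 ∈ d2 :: pb
  · rcases List.mem_cons.1 hd1 with rfl | hd1pb
    · exact hq1d (mem_of_getLast? hq1.2.1)
    · obtain ⟨pc, pd, hpb, hd1pd⟩ := split_last hd1pb
      have hsuf2 : IsPath E d1 v (d1 :: pd) := by
        have : IsPath E d2 v ((d2 :: pc) ++ d1 :: pd) := by rwa [hpb] at hsuf
        exact isPath_suffix this
      have hnew : IsPath E r v (q2 ++ pd) := isPath_concat hq2 hsuf2
      have := h2 _ hnew
      rcases List.mem_append.1 this with h | h
      · exact hq2d h
      · exact hd2pb (hpb ▸ List.mem_append.2 (Or.inr (List.mem_cons_of_mem _ h)))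
  · have hnew : IsPath E r v (q1 ++ pb) := isPath_concat hq1 hsuf
    have := h1 _ hnew
    rcases List.mem_append.1 this with h | h
    · exact hq1d h
    · exact hd1 (List.mem_cons_of_mem _ h)
end

section
/- In a reducible CFG, the bodies of two reducible loops are either disjoint or one is contained in the other; equivalently, loops ordered by body containment form a forest. -/
/-- Paths staying inside a vertex set `B`. -/
def ReachIn {V : Type*} (E : V → V → Prop) (B : Set V) (s t : V) : Prop :=
  ∃ p, IsPath E s t p ∧ ∀ x ∈ p, x ∈ B

lemma first_entry {V : Type*} (E : V → V → Prop) (B : Set V) (h : V)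
    (hentry : ∀ x y, E x y → x ∉ B → y ∈ B → y = h) :
    ∀ (p : List V) (s t : V), IsPath E s t p → t ∈ B → s ∈ B ∨ h ∈ p := by
  intro p
  induction p with
  | nil => intro s t ⟨hs, _, _⟩ _; simp at hs
  | cons a rest ih =>
    intro s t ⟨hs, ht, hc⟩ htB
    simp only [List.head?_cons, Option.some.injEq] at hs
    subst hs
    by_cases haB : a ∈ B
    · exact Or.inl haB
    · right
      cases rest with
      | nil =>
        simp only [List.getLast?_singleton, Option.some.injEq] at ht
        subst ht; exact absurd htB haB
      | cons b rest' =>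
        have hE : E a b := (List.isChain_cons_cons.mp hc).1
        have ht' : (b :: rest').getLast? = some t := by
          rw [← ht]; exact (List.getLast?_cons_cons ..).symm
        have := ih b t ⟨rfl, ht', (List.isChain_cons_cons.mp hc).2⟩ htB
        rcases this with hbB | hmem
        · have := hentry a b hE haB hbB
          subst this; exact List.mem_cons_of_mem _ List.mem_cons_self
        · exact List.mem_cons_of_mem _ hmem

lemma path_prefix {V : Type*} (E : V → V → Prop) {s t x : V} {l1 l2 : List V}
    (hp : IsPath E s t (l1 ++ x :: l2)) : IsPath E s x (l1 ++ [x]) := by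
  obtain ⟨hs, _, hc⟩ := hp
  refine ⟨?_, by simp, ?_⟩
  · cases l1 with
    | nil => simpa using hs
    | cons a l => simpa using hs
  · have : ((l1 ++ [x]) ++ l2).Chain' E := by simpa using hc
    exact (List.isChain_append.mp this).1

lemma dom_antisymm {V : Type*} (E : V → V → Prop) (r a b : V) (hne : a ≠ b)
    (d1 : Dom E r a b) (d2 : Dom E r b a) (hr : Reach E r a) : False := by
  obtain ⟨p, hp⟩ := hr
  have key : ∀ n (p : List V), p.length ≤ n → IsPath E r a p → False := by
    intro n
    induction n with
    | zero =>
      intro p hlen hp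
      interval_cases h : p.length
      · rw [List.length_eq_zero_iff] at h; subst h; exact by simp [IsPath] at hp
    | succ n ih =>
      intro p hlen hp
      have hbmem : b ∈ p := d2 p hp
      obtain ⟨l1, l2, rfl⟩ := List.append_of_mem hbmem
      have hq : IsPath E r b (l1 ++ [b]) := path_prefix E hp
      have hamem : a ∈ l1 ++ [b] := d1 _ hq
      have hamem' : a ∈ l1 := by
        rcases List.mem_append.mp hamem with h | h
        · exact h
        · simp at h; exact absurd h hne
      obtain ⟨m1, m2, rfl⟩ := List.append_of_mem hamem'
      have hq' : IsPath E r a (m1 ++ [a]) := by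
        have : (m1 ++ a :: m2) ++ b :: l2 = m1 ++ a :: (m2 ++ b :: l2) := by simp
        rw [this] at hp
        exact path_prefix E hp
      apply ih (m1 ++ [a]) _ hq'
      simp only [List.length_append, List.length_cons, List.length_nil] at hlen ⊢
      omega
  exact key p.length p le_rfl hp

/-- Bodies of two reducible (single-entry, strongly connected) loops are
disjoint or nested. -/
theorem loop_bodies_laminar {V : Type*} (E : V → V → Prop) (r : V)
    (hreach : ∀ v, Reach E r v)
    (h1 h2 : V) (B1 B2 : Set V)
    (hh1 : h1 ∈ B1) (hh2 : h2 ∈ B2)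
    (hsc1 : ∀ a ∈ B1, ∀ b ∈ B1, ReachIn E B1 a b)
    (hsc2 : ∀ a ∈ B2, ∀ b ∈ B2, ReachIn E B2 a b)
    (hentry1 : ∀ x y, E x y → x ∉ B1 → y ∈ B1 → y = h1)
    (hentry2 : ∀ x y, E x y → x ∉ B2 → y ∈ B2 → y = h2)
    (hdom1 : ∀ b ∈ B1, Dom E r h1 b)
    (hdom2 : ∀ b ∈ B2, Dom E r h2 b)
    (hhead : h1 = h2 → B1 = B2) :
    Disjoint B1 B2 ∨ B1 ⊆ B2 ∨ B2 ⊆ B1 := by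
  by_cases hd : Disjoint B1 B2
  · exact Or.inl hd
  right
  rw [Set.not_disjoint_iff] at hd
  obtain ⟨x, hx1, hx2⟩ := hd
  by_cases hne : h1 = h2
  · exact Or.inl (hhead hne).subset
  -- From a path h2 → x inside B2 with x ∈ B1, get h2 ∈ B1 ∨ h1 ∈ B2
  obtain ⟨p, hp, hpB⟩ := hsc2 h2 hh2 x hx2
  have hcase : h2 ∈ B1 ∨ h1 ∈ B2 := by
    rcases first_entry E B1 h1 hentry1 p h2 x hp hx1 with h | h
    · exact Or.inl h
    · exact Or.inr (hpB h1 h)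
  rcases hcase with hc | hc
  · -- h2 ∈ B1 : show B2 ⊆ B1
    right
    intro z hz
    obtain ⟨q, hq, hqB⟩ := hsc2 z hz h2 hh2
    rcases first_entry E B1 h1 hentry1 q z h2 hq hc with h | h
    · exact h
    · exact (dom_antisymm E r h1 h2 hne (hdom1 h2 hc) (hdom2 h1 (hqB h1 h)) (hreach h1)).elim
  · -- h1 ∈ B2 : show B1 ⊆ B2
    left
    intro z hz
    obtain ⟨q, hq, hqB⟩ := hsc1 z hz h1 hh1
    rcases first_entry E B2 h2 hentry2 q z h1 hq hc with h | h
    · exact h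
    · exact (dom_antisymm E r h1 h2 hne (hdom1 h2 (hqB h2 h)) (hdom2 h1 hc) (hreach h1)).elim
end
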